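/- In the under-bagging setting, the total bagged weight satisfies, for every point x, 1 − Σ_{i=1}^n V̄^u_i(x) ≤ exp( − (s − k)² / (2n) ), provided k ≤ s. -/

import Mathlib

open MeasureTheory ProbabilityTheory

/-- For `t ≤ 0`, `exp t ≤ 1 + t + t²/2`. -/
lemma exp_le_one_add_add_sq_half {t : ℝ} (ht : t ≤ 0) :
    Real.exp t ≤ 1 + t + t ^ 2 / 2 := by
  set f : ℝ → ℝ := fun x => 1 + x + x ^ 2 / 2 - Real.exp x with hf
  have hderiv : ∀ x : ℝ, HasDerivAt f (1 + x - Real.exp x) x := by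
    intro x
    have h1 : HasDerivAt (fun x : ℝ => 1 + x) 1 x := (hasDerivAt_id x).const_add 1
    have h2 : HasDerivAt (fun x : ℝ => x ^ 2 / 2) x x := by
      simpa using (hasDerivAt_pow 2 x).div_const 2
    exact (h1.add h2).sub (Real.hasDerivAt_exp x)
  have hanti : AntitoneOn f (Set.Iic (0 : ℝ)) := by
    refine antitoneOn_of_deriv_nonpos (convex_Iic 0) ?_ ?_ ?_
    · exact (Continuous.continuousOn (by fun_prop))
    · intro x _
      exact (hderiv x).differentiableAt.differentiableWithinAt
    · intro x _
      rw [(hderiv x).deriv]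
      linarith [Real.add_one_le_exp x]
  have h := hanti (Set.mem_Iic.2 ht) (Set.mem_Iic.2 le_rfl) ht
  have hf0 : f 0 = 0 := by simp [hf]
  rw [hf0] at h
  simp only [hf] at h
  linarith

/-- Counting lemma: the number of indices `i ∈ [1,n]` where the `i`-th value is `1` and the
partial sum up to `i` is at most `k` equals `min (∑_{l=1}^n f l) k`. -/
lemma count_accepted_eq_min (f : ℕ → ℕ) (hf : ∀ l, f l ≤ 1) (k : ℕ) :
    ∀ n : ℕ, (∑ i ∈ Finset.Icc 1 n,
        (if (∑ l ∈ Finset.Icc 1 i, f l) ≤ k ∧ f i = 1 then 1 else 0)) =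
      min (∑ l ∈ Finset.Icc 1 n, f l) k := by
  intro n
  induction n with
  | zero => simp
  | succ m ih =>
    rw [Finset.sum_Icc_succ_top (Nat.le_add_left 1 m), Finset.sum_Icc_succ_top (Nat.le_add_left 1 m), ih]
    rcases Nat.le_one_iff_eq_zero_or_eq_one.mp (hf (m + 1)) with h | h
    · rw [h]; simp
    · rw [h]
      by_cases hc : (∑ l ∈ Finset.Icc 1 m, f l) + 1 ≤ k
      · rw [if_pos ⟨hc, rfl⟩]; omega
      · rw [if_neg (by tauto)]; omega

/-- in the under-bagging setting (each of the `n` nearest neighbors of `x` is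
independently accepted, with acceptance probabilities `p_i ∈ (0,1]` summing to `s`), the
total bagged weight `∑_{i=1}^n V̄^u_i(x)`, where
`V̄^u_i(x) = (1/k) P(∑_{l=1}^i ξ_l ≤ k, ξ_i = 1)`, satisfies
`1 − ∑_{i=1}^n V̄^u_i(x) ≤ exp(−(s−k)²/(2n))` provided `k ≤ s`. -/
theorem underbagging_total_weight_bound
    {Ω : Type*} [MeasurableSpace Ω] (P : Measure Ω) [IsProbabilityMeasure P]
    (n k : ℕ) (hn : 0 < n) (hk : 1 ≤ k)
    (s : ℝ) (hks : (k : ℝ) ≤ s)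
    (p : ℕ → ℝ) (hp : ∀ i, p i ∈ Set.Ioc (0 : ℝ) 1)
    (hs : ∑ i ∈ Finset.Icc 1 n, p i = s)
    (ξ : ℕ → Ω → ℕ) (hmeas : ∀ i, Measurable (ξ i))
    (h01 : ∀ i ω, ξ i ω ≤ 1)
    (hindep : iIndepFun ξ P)
    (hpi : ∀ i, (P {ω | ξ i ω = 1}).toReal = p i)
    (Vbar : ℕ → ℝ)
    (hV : ∀ i, Vbar i = (1 / k : ℝ) *
      (P {ω | (∑ l ∈ Finset.Icc 1 i, ξ l ω) ≤ k ∧ ξ i ω = 1}).toReal) :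
    1 - ∑ i ∈ Finset.Icc 1 n, Vbar i ≤ Real.exp (-(s - k) ^ 2 / (2 * n)) := by
  classical
  -- notation
  set A : ℕ → Set Ω := fun i => {ω | (∑ l ∈ Finset.Icc 1 i, ξ l ω) ≤ k ∧ ξ i ω = 1} with hA
  set S : Ω → ℕ := fun ω => ∑ l ∈ Finset.Icc 1 n, ξ l ω with hS
  have hSmeas : ∀ m : ℕ, Measurable (fun ω => ∑ l ∈ Finset.Icc 1 m, ξ l ω) := by
    intro m
    exact Finset.measurable_sum _ fun l _ => hmeas l
  have hAmeas : ∀ i, MeasurableSet (A i) := by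
    intro i
    have : A i = (fun ω => ∑ l ∈ Finset.Icc 1 i, ξ l ω) ⁻¹' {m | m ≤ k} ∩ ξ i ⁻¹' {1} := by
      ext ω; simp [hA, Set.mem_setOf_eq]
    rw [this]
    exact ((hSmeas i) (MeasurableSet.of_discrete)).inter ((hmeas i) (MeasurableSet.of_discrete))
  set B : Set Ω := {ω | k ≤ S ω} with hB
  have hBmeas : MeasurableSet B :=
    (hSmeas n) (MeasurableSet.of_discrete)
  -- Step 1: k * P B ≤ ∑ P (A i)
  have step1 : (k : ENNReal) * P B ≤ ∑ i ∈ Finset.Icc 1 n, P (A i) := by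
    have hsum : ∑ i ∈ Finset.Icc 1 n, P (A i)
        = ∫⁻ ω, ∑ i ∈ Finset.Icc 1 n, (A i).indicator (fun _ => (1 : ENNReal)) ω ∂P := by
      rw [lintegral_finset_sum _ (fun i _ => (measurable_const.indicator (hAmeas i)))]
      refine Finset.sum_congr rfl fun i _ => ?_
      rw [lintegral_indicator_const (hAmeas i)]
      simp
    rw [hsum]
    have hpt : ∀ ω, B.indicator (fun _ => (k : ENNReal)) ω
        ≤ ∑ i ∈ Finset.Icc 1 n, (A i).indicator (fun _ => (1 : ENNReal)) ω := by
      intro ω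
      have hcount := count_accepted_eq_min (fun l => ξ l ω) (fun l => h01 l ω) k n
      have hsum_eq : ∑ i ∈ Finset.Icc 1 n, (A i).indicator (fun _ => (1 : ENNReal)) ω
          = ((min (S ω) k : ℕ) : ENNReal) := by
        rw [← hcount]
        push_cast
        refine Finset.sum_congr rfl fun i _ => ?_
        by_cases h : ω ∈ A i
        · have h' : (∑ l ∈ Finset.Icc 1 i, ξ l ω) ≤ k ∧ ξ i ω = 1 := h
          simp [Set.indicator_of_mem h, if_pos h']
        · have h' : ¬((∑ l ∈ Finset.Icc 1 i, ξ l ω) ≤ k ∧ ξ i ω = 1) := h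
          simp [Set.indicator_of_notMem h, if_neg h']
      rw [hsum_eq]
      by_cases hω : ω ∈ B
      · have : min (S ω) k = k := min_eq_right hω
        rw [Set.indicator_of_mem hω, this]
      · simp [Set.indicator_of_notMem hω]
    calc (k : ENNReal) * P B
        = ∫⁻ ω, B.indicator (fun _ => (k : ENNReal)) ω ∂P := by
          rw [lintegral_indicator_const hBmeas]
      _ ≤ _ := lintegral_mono hpt
  -- Step 2: 1 - ∑ Vbar ≤ (P Bᶜ).toReal
  have hPB_sum : (P B).toReal + (P Bᶜ).toReal = 1 := by
    have h := measure_add_measure_compl (μ := P) hBmeas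
    have := congrArg ENNReal.toReal h
    rwa [ENNReal.toReal_add (measure_ne_top P B) (measure_ne_top P Bᶜ),
      measure_univ, ENNReal.toReal_one] at this
  have step2 : 1 - ∑ i ∈ Finset.Icc 1 n, Vbar i ≤ (P Bᶜ).toReal := by
    have hkpos : (0 : ℝ) < k := by exact_mod_cast hk
    have htoReal : (k : ℝ) * (P B).toReal ≤ ∑ i ∈ Finset.Icc 1 n, (P (A i)).toReal := by
      have h := ENNReal.toReal_mono (by
          exact (ENNReal.sum_lt_top.2 fun i _ => (measure_lt_top P (A i))).ne) step1
      rwa [ENNReal.toReal_mul, ENNReal.toReal_natCast, ENNReal.toReal_sum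
        (fun i _ => measure_ne_top P (A i))] at h
    have hVsum : ∑ i ∈ Finset.Icc 1 n, Vbar i
        = (1 / k : ℝ) * ∑ i ∈ Finset.Icc 1 n, (P (A i)).toReal := by
      rw [Finset.mul_sum]
      exact Finset.sum_congr rfl fun i _ => hV i
    have : (P B).toReal ≤ ∑ i ∈ Finset.Icc 1 n, Vbar i := by
      rw [hVsum, one_div, inv_mul_eq_div, le_div_iff₀ hkpos]
      linarith
    linarith [hPB_sum, this]
  -- real-valued variables
  set X : ℕ → Ω → ℝ := fun i ω => (ξ i ω : ℝ) with hX
  have hXmeas : ∀ i, Measurable (X i) := fun i => (measurable_from_top).comp (hmeas i)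
  set T : Ω → ℝ := ∑ i ∈ Finset.Icc 1 n, X i with hT
  have hTapply : ∀ ω, T ω = ∑ i ∈ Finset.Icc 1 n, X i ω := fun ω => by simp [hT]
  have hTfun : T = fun ω => ∑ i ∈ Finset.Icc 1 n, X i ω := funext hTapply
  have hTmeas : Measurable T := by
    rw [hTfun]
    exact Finset.measurable_sum _ fun i _ => hXmeas i
  -- Step 3: (P Bᶜ).toReal ≤ (P {ω | T ω ≤ k}).toReal
  have step3 : (P Bᶜ).toReal ≤ (P {ω | T ω ≤ (k : ℝ)}).toReal := by
    refine ENNReal.toReal_mono (measure_ne_top _ _) (measure_mono ?_)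
    intro ω hω
    have hω' : S ω < k := by simpa [hB, Set.mem_compl_iff, Set.mem_setOf_eq, not_le] using hω
    have hTω : T ω = ((S ω : ℕ) : ℝ) := by
      simp [hT, hS, hX, Finset.sum_apply]
    simp only [Set.mem_setOf_eq, hTω]
    exact_mod_cast hω'.le
  -- Step 4: Chernoff bound
  set t : ℝ := ((k : ℝ) - s) / n with ht_def
  have hnpos : (0 : ℝ) < n := by exact_mod_cast hn
  have ht0 : t ≤ 0 := div_nonpos_of_nonpos_of_nonneg (by linarith) hnpos.le
  -- pointwise description of exp (t * X i ω)
  have hptwise : ∀ i ω, Real.exp (t * X i ω)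
      = 1 + (Real.exp t - 1) * ({ω | ξ i ω = 1} : Set Ω).indicator (1 : Ω → ℝ) ω := by
    intro i ω
    by_cases h : ξ i ω = 1
    · simp [Set.indicator_of_mem (h : ω ∈ {ω | ξ i ω = 1}), hX, h]
    · have h0 : ξ i ω = 0 := by have := h01 i ω; omega
      simp [Set.indicator_of_notMem (h : ω ∉ {ω | ξ i ω = 1}), hX, h0]
  have hξmeasSet : ∀ i, MeasurableSet {ω | ξ i ω = 1} := fun i =>
    (hmeas i) (MeasurableSet.of_discrete (s := {x : ℕ | x = 1}))
  have h_int : ∀ i, Integrable (fun ω => Real.exp (t * X i ω)) P := by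
    intro i
    have : (fun ω => Real.exp (t * X i ω))
        = fun ω => 1 + (Real.exp t - 1) * ({ω | ξ i ω = 1} : Set Ω).indicator (1 : Ω → ℝ) ω := by
      funext ω; exact hptwise i ω
    rw [this]
    exact (integrable_const 1).add
      (((integrable_const (1 : ℝ)).indicator (hξmeasSet i)).const_mul _)
  -- mgf of each X i
  have hmgf_i : ∀ i, mgf (X i) P t = 1 + (Real.exp t - 1) * p i := by
    intro i
    unfold mgf
    calc ∫ ω, Real.exp (t * X i ω) ∂P
        = ∫ ω, (1 + (Real.exp t - 1) * ({ω | ξ i ω = 1} : Set Ω).indicator (1 : Ω → ℝ) ω) ∂P := by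
          exact integral_congr_ae (Filter.Eventually.of_forall (hptwise i))
      _ = (∫ _ω, (1 : ℝ) ∂P)
            + ∫ ω, (Real.exp t - 1) * ({ω | ξ i ω = 1} : Set Ω).indicator (1 : Ω → ℝ) ω ∂P := by
          refine integral_add (integrable_const 1) (Integrable.const_mul ?_ _)
          exact (integrable_const (1 : ℝ)).indicator (hξmeasSet i)
      _ = 1 + (Real.exp t - 1) * (P {ω | ξ i ω = 1}).toReal := by
          rw [integral_const_mul, integral_indicator_one (hξmeasSet i)]
          simp [Measure.real]
      _ = 1 + (Real.exp t - 1) * p i := by rw [hpi i]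
  -- bound each mgf
  have hmgf_bound : ∀ i, mgf (X i) P t ≤ Real.exp (p i * t + t ^ 2 / 2) := by
    intro i
    rw [hmgf_i i]
    obtain ⟨hpi_pos, hpi_le⟩ := hp i
    have h1 : 1 + (Real.exp t - 1) * p i ≤ Real.exp ((Real.exp t - 1) * p i) := by
      linarith [Real.add_one_le_exp ((Real.exp t - 1) * p i)]
    refine h1.trans (Real.exp_le_exp.2 ?_)
    have hexp : Real.exp t - 1 ≤ t + t ^ 2 / 2 := by
      linarith [exp_le_one_add_add_sq_half ht0]
    have hsq : (0 : ℝ) ≤ t ^ 2 := sq_nonneg t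
    nlinarith
  -- independence of X
  have hindepX : iIndepFun X P := by
    have := hindep.comp (fun _ => (Nat.cast : ℕ → ℝ)) (fun _ => measurable_from_top)
    exact this
  -- mgf of the sum
  have hmgf_sum : mgf T P t = ∏ i ∈ Finset.Icc 1 n, mgf (X i) P t := by
    rw [hT]
    exact hindepX.mgf_sum hXmeas (Finset.Icc 1 n)
  have hmgf_T : mgf T P t ≤ Real.exp (s * t + n * t ^ 2 / 2) := by
    rw [hmgf_sum]
    calc ∏ i ∈ Finset.Icc 1 n, mgf (X i) P t
        ≤ ∏ i ∈ Finset.Icc 1 n, Real.exp (p i * t + t ^ 2 / 2) := by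
          refine Finset.prod_le_prod (fun i _ => mgf_nonneg) (fun i _ => hmgf_bound i)
      _ = Real.exp (∑ i ∈ Finset.Icc 1 n, (p i * t + t ^ 2 / 2)) := by
          rw [Real.exp_sum]
      _ = Real.exp (s * t + n * t ^ 2 / 2) := by
          congr 1
          rw [Finset.sum_add_distrib, ← Finset.sum_mul, hs, Finset.sum_const,
            Nat.card_Icc]
          simp
          ring
  -- Chernoff applied to T
  have h_int_T : Integrable (fun ω => Real.exp (t * T ω)) P := by
    refine Integrable.mono' (integrable_const (1 : ℝ))
      ((Real.measurable_exp.comp (hTmeas.const_mul t)).aestronglyMeasurable) ?_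
    refine Filter.Eventually.of_forall fun ω => ?_
    rw [Real.norm_eq_abs, abs_of_pos (Real.exp_pos _)]
    rw [← Real.exp_zero]
    apply Real.exp_le_exp.2
    have hT0 : 0 ≤ T ω := by
      rw [hT]
      simp only [Finset.sum_apply]
      exact Finset.sum_nonneg fun i _ => by positivity
    exact mul_nonpos_of_nonpos_of_nonneg ht0 hT0
  have chernoff : (P {ω | T ω ≤ (k : ℝ)}).toReal
      ≤ Real.exp (-t * k) * mgf T P t :=
    measure_le_le_exp_mul_mgf (k : ℝ) ht0 h_int_T
  -- final arithmetic
  have final : Real.exp (-t * k) * Real.exp (s * t + n * t ^ 2 / 2)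
      = Real.exp (-(s - k) ^ 2 / (2 * n)) := by
    rw [← Real.exp_add]
    congr 1
    rw [ht_def]
    field_simp
    ring
  calc 1 - ∑ i ∈ Finset.Icc 1 n, Vbar i
      ≤ (P Bᶜ).toReal := step2
    _ ≤ (P {ω | T ω ≤ (k : ℝ)}).toReal := step3
    _ ≤ Real.exp (-t * k) * mgf T P t := chernoff
    _ ≤ Real.exp (-t * k) * Real.exp (s * t + n * t ^ 2 / 2) := by
        exact mul_le_mul_of_nonneg_left hmgf_T (Real.exp_pos _).le
    _ = Real.exp (-(s - k) ^ 2 / (2 * n)) := final
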